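/- Let k > 0, θ > 0, r > 0. Let X be a real random variable distributed as Gamma(k, θ), and let ε be an integrable real random variable independent of X with E[ε] = 1. If the mean-equilibrium condition E[X · e^{r(1 − X)} · ε] = kθ holds, then 1 + rθ = e^{r/(k + 1)}; equivalently, θ = (e^{r/(k + 1)} − 1)/r. -/

import Mathlib

open MeasureTheory ProbabilityTheory Real
open scoped ENNReal NNReal

lemma aux_gamma_integral (a b r : ℝ) (ha : 0 < a) (hb : 0 < b) (hr : 0 < r) :
    ∫ x, x * Real.exp (r * (1 - x)) ∂(gammaMeasure a b)
      = Real.exp r * a * b ^ a / (b + r) ^ (a + 1) := by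
  have hmeas : Measurable fun x : ℝ => (gammaPDFReal a b x).toNNReal :=
    (measurable_gammaPDFReal a b).real_toNNReal
  have h1 : gammaMeasure a b
      = volume.withDensity (fun x => ((gammaPDFReal a b x).toNNReal : ℝ≥0∞)) := rfl
  rw [h1, integral_withDensity_eq_integral_smul hmeas]
  have h2 : ∀ x : ℝ, (gammaPDFReal a b x).toNNReal • (x * Real.exp (r * (1 - x)))
      = gammaPDFReal a b x * (x * Real.exp (r * (1 - x))) := by
    intro x
    rw [NNReal.smul_def, smul_eq_mul, Real.coe_toNNReal _ (gammaPDFReal_nonneg ha hb x)]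
  simp_rw [h2]
  rw [← setIntegral_eq_integral_of_forall_compl_eq_zero (s := Set.Ici 0)
      (fun x hx => by
        simp only [gammaPDFReal, if_neg (show ¬ (0:ℝ) ≤ x by simpa using hx), zero_mul]),
    integral_Ici_eq_integral_Ioi]
  rw [setIntegral_congr_fun measurableSet_Ioi (g := fun x =>
      (Real.exp r * (b ^ a / Real.Gamma a)) * (x ^ (a + 1 - 1) * Real.exp (-((b + r) * x))))
      ?_]
  · rw [integral_const_mul, integral_rpow_mul_exp_neg_mul_Ioi (by linarith) (by linarith),
      Real.Gamma_add_one ha.ne', one_div, Real.inv_rpow (by linarith)]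
    have hΓ : Real.Gamma a ≠ 0 := (Real.Gamma_pos_of_pos ha).ne'
    have hbr : ((b + r) ^ (a + 1) : ℝ) ≠ 0 := (Real.rpow_pos_of_pos (by linarith) _).ne'
    field_simp
  · intro x hx
    have hx0 : (0:ℝ) < x := hx
    simp only [gammaPDFReal, if_pos hx0.le]
    have hxa : x ^ (a + 1 - 1) = x ^ (a - 1) * x := by
      rw [show a + 1 - 1 = (a - 1) + 1 by ring, Real.rpow_add hx0, Real.rpow_one]
    have hexp : Real.exp (-(b * x)) * Real.exp (r * (1 - x))
        = Real.exp r * Real.exp (-((b + r) * x)) := by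
      rw [← Real.exp_add, ← Real.exp_add]; ring_nf
    rw [hxa]
    linear_combination (b ^ a / Real.Gamma a * (x ^ (a - 1) * x)) * hexp

/-- Let `k, θ, r > 0`, `X ~ Gamma(k, θ)` (rate `1/θ`), and `ε` integrable,
independent of `X`, with `E[ε] = 1`. If the mean-equilibrium condition
`E[X · e^{r(1 − X)} · ε] = kθ` holds, then `1 + rθ = e^{r/(k + 1)}`; equivalently,
`θ = (e^{r/(k + 1)} − 1)/r`. -/
theorem stmt13 {Ω : Type*} {mΩ : MeasurableSpace Ω} (μ : Measure Ω) [IsProbabilityMeasure μ]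
    (k θ r : ℝ) (hk : 0 < k) (hθ : 0 < θ) (hr : 0 < r)
    (X ε : Ω → ℝ) (hXm : Measurable X)
    (hX : Measure.map X μ = gammaMeasure k θ⁻¹)
    (hε : Integrable ε μ) (hindep : IndepFun ε X μ) (hεmean : ∫ ω, ε ω ∂μ = 1)
    (heq : ∫ ω, X ω * Real.exp (r * (1 - X ω)) * ε ω ∂μ = k * θ) :
    1 + r * θ = Real.exp (r / (k + 1)) ∧ θ = (Real.exp (r / (k + 1)) - 1) / r := by
  have hfm : Measurable fun x : ℝ => x * Real.exp (r * (1 - x)) :=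
    measurable_id.mul (measurable_const.mul (measurable_const.sub measurable_id)).exp
  have hindep2 : IndepFun ((fun x : ℝ => x * Real.exp (r * (1 - x))) ∘ X) ε μ := by
    simpa using hindep.symm.comp hfm measurable_id
  have key : ∫ ω, X ω * Real.exp (r * (1 - X ω)) * ε ω ∂μ
      = (∫ ω, X ω * Real.exp (r * (1 - X ω)) ∂μ) * ∫ ω, ε ω ∂μ := by
    simpa [Function.comp] using
      hindep2.integral_mul_eq_mul_integral ((hfm.comp hXm).aestronglyMeasurable) hε.1
  have hmap : ∫ ω, X ω * Real.exp (r * (1 - X ω)) ∂μ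
      = ∫ x, x * Real.exp (r * (1 - x)) ∂(gammaMeasure k θ⁻¹) := by
    rw [← hX, integral_map hXm.aemeasurable hfm.aestronglyMeasurable]
  rw [key, hεmean, mul_one, hmap,
    aux_gamma_integral k θ⁻¹ r hk (inv_pos.mpr hθ) hr] at heq
  -- heq : exp r * k * θ⁻¹ ^ k / (θ⁻¹ + r) ^ (k + 1) = k * θ
  have hθinv : (0:ℝ) < θ⁻¹ := inv_pos.mpr hθ
  have hA : (0:ℝ) < 1 + r * θ := by positivity
  have hsplit : (θ⁻¹ + r) ^ (k + 1) = θ⁻¹ ^ (k + 1) * (1 + r * θ) ^ (k + 1) := by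
    rw [← Real.mul_rpow hθinv.le hA.le]
    congr 1
    field_simp
  have hexpr : Real.exp r = (1 + r * θ) ^ (k + 1) := by
    have h1 : θ⁻¹ ^ k = θ⁻¹ ^ (k + 1) * θ := by
      rw [Real.rpow_add hθinv, Real.rpow_one]
      field_simp
    rw [hsplit, h1] at heq
    have h2 : (0:ℝ) < θ⁻¹ ^ (k + 1) := Real.rpow_pos_of_pos hθinv _
    have h3 : (0:ℝ) < (1 + r * θ) ^ (k + 1) := Real.rpow_pos_of_pos hA _
    rw [div_eq_iff (by positivity : θ⁻¹ ^ (k + 1) * (1 + r * θ) ^ (k + 1) ≠ 0)] at heq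
    apply mul_right_cancel₀ (b := k * θ * θ⁻¹ ^ (k + 1))
      (by positivity : k * θ * θ⁻¹ ^ (k + 1) ≠ 0)
    linear_combination heq
  have hmain : 1 + r * θ = Real.exp (r / (k + 1)) := by
    have hk1 : (k + 1) ≠ 0 := by positivity
    have h := Real.rpow_rpow_inv hA.le hk1
    rw [← hexpr] at h
    rw [← h, ← Real.exp_mul, ← div_eq_mul_inv]
  refine ⟨hmain, ?_⟩
  rw [← hmain]
  field_simp
  ring
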